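/- Soundness of bidirectional typing with respect to type assignment: if Ψ ⊢ e ⇐ A or Ψ ⊢ e ⇒ A in the declarative bidirectional system, then there exists an annotation-free term e' such that Ψ ⊢ e' : A in the type assignment system and e' =βη |e|. -/

import Mathlib

set_option autoImplicit true

namespace DK

/-- Types: 1 | α | A → B | ∀α. A  (type variables named by naturals) -/
inductive Ty : Type where
  | unit : Ty
  | var : ℕ → Ty
  | arr : Ty → Ty → Ty
  | all : ℕ → Ty → Ty

/-- Monotypes: types containing no quantifiers. -/
def Ty.mono : Ty → Prop
  | .unit => True
  | .var _ => True
  | .arr A B => A.mono ∧ B.mono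
  | .all _ _ => False

/-- Free type variables. -/
def Ty.fv : Ty → Finset ℕ
  | .unit => ∅
  | .var a => {a}
  | .arr A B => A.fv ∪ B.fv
  | .all a A => A.fv.erase a

/-- `A.subst τ a` is the substitution [τ/a]A. -/
def Ty.subst : Ty → Ty → ℕ → Ty
  | .unit, _, _ => .unit
  | .var b, τ, a => if b = a then τ else .var b
  | .arr A B, τ, a => .arr (A.subst τ a) (B.subst τ a)
  | .all b A, τ, a => .all b (if b = a then A else A.subst τ a)

/-- Declarative context entries: type variables α and term variable typings x : A. -/
inductive Decl : Type where
  | tvar : ℕ → Decl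
  | var : ℕ → Ty → Decl

/-- Declarative contexts; the most recent declaration is the head
    (so "Ψ, α" is `Decl.tvar α :: Ψ`). -/
abbrev Ctx := List Decl

/-- Well-formedness Ψ ⊢ A : every free type variable of A is declared in Ψ. -/
def WfTy (Ψ : Ctx) (A : Ty) : Prop :=
  ∀ a ∈ A.fv, Decl.tvar a ∈ Ψ

/-- Declarative subtyping Ψ ⊢ A ≤ B. -/
inductive Sub : Ctx → Ty → Ty → Prop where
  | var : Decl.tvar a ∈ Ψ → Sub Ψ (.var a) (.var a)
  | unit : Sub Ψ .unit .unit
  | arr : Sub Ψ B₁ A₁ → Sub Ψ A₂ B₂ → Sub Ψ (.arr A₁ A₂) (.arr B₁ B₂)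
  | allL : (τ : Ty) → τ.mono → WfTy Ψ τ → Sub Ψ (A.subst τ a) B → Sub Ψ (.all a A) B
  | allR : Sub (Decl.tvar b :: Ψ) A B → Sub Ψ A (.all b B)

end DK

namespace DK

/-- Terms: x | () | λx.e | e₁ e₂ | (e : A). -/
inductive Tm : Type where
  | var : ℕ → Tm
  | unit : Tm
  | lam : ℕ → Tm → Tm
  | app : Tm → Tm → Tm
  | anno : Tm → Ty → Tm

/-- Erasure |e| of all type annotations. -/
def Tm.erase : Tm → Tm
  | .var x => .var x
  | .unit => .unit
  | .lam x e => .lam x e.erase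
  | .app e₁ e₂ => .app e₁.erase e₂.erase
  | .anno e _ => e.erase

/-- A term is annotation-free if it contains no type annotations. -/
def Tm.annFree : Tm → Prop
  | .var _ => True
  | .unit => True
  | .lam _ e => e.annFree
  | .app e₁ e₂ => e₁.annFree ∧ e₂.annFree
  | .anno _ _ => False

/-- Free term variables. -/
def Tm.fv : Tm → Finset ℕ
  | .var x => {x}
  | .unit => ∅
  | .lam x e => e.fv.erase x
  | .app e₁ e₂ => e₁.fv ∪ e₂.fv
  | .anno e _ => e.fv

/-- `e'.subst e x` is the term substitution [e/x]e'. -/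
def Tm.subst : Tm → Tm → ℕ → Tm
  | .var y, v, x => if y = x then v else .var y
  | .unit, _, _ => .unit
  | .lam y e, v, x => .lam y (if y = x then e else e.subst v x)
  | .app e₁ e₂, v, x => .app (e₁.subst v x) (e₂.subst v x)
  | .anno e A, v, x => .anno (e.subst v x) A

/-- Type assignment Ψ ⊢ e : A (for annotation-free terms). -/
inductive Assign : Ctx → Tm → Ty → Prop where
  | var : Decl.var x A ∈ Ψ → Assign Ψ (.var x) A
  | unit : Assign Ψ .unit .unit
  | lam : Assign (Decl.var x A :: Ψ) e B → Assign Ψ (.lam x e) (.arr A B)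
  | app : Assign Ψ e₁ (.arr A B) → Assign Ψ e₂ A → Assign Ψ (.app e₁ e₂) B
  | allI : Assign (Decl.tvar a :: Ψ) e A → Assign Ψ e (.all a A)
  | allE : Assign Ψ e (.all a A) → (τ : Ty) → τ.mono → WfTy Ψ τ →
      Assign Ψ e (A.subst τ a)

mutual
/-- Declarative bidirectional checking Ψ ⊢ e ⇐ A. -/
inductive Chk : Ctx → Tm → Ty → Prop where
  | sub : Syn Ψ e A → Sub Ψ A B → Chk Ψ e B
  | unitI : Chk Ψ .unit .unit
  | allI : Chk (Decl.tvar a :: Ψ) e A → Chk Ψ e (.all a A)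
  | arrI : Chk (Decl.var x A :: Ψ) e B → Chk Ψ (.lam x e) (.arr A B)

/-- Declarative bidirectional synthesis Ψ ⊢ e ⇒ A. -/
inductive Syn : Ctx → Tm → Ty → Prop where
  | var : Decl.var x A ∈ Ψ → Syn Ψ (.var x) A
  | anno : WfTy Ψ A → Chk Ψ e A → Syn Ψ (.anno e A) A
  | unitI : Syn Ψ .unit .unit
  | arrI : Ty.mono σ → Ty.mono τ → WfTy Ψ (.arr σ τ) →
      Chk (Decl.var x σ :: Ψ) e τ → Syn Ψ (.lam x e) (.arr σ τ)
  | arrE : Syn Ψ e₁ A → App Ψ e₂ A C → Syn Ψ (.app e₁ e₂) C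

/-- Declarative application judgment Ψ ⊢ e • A ⇒⇒ C. -/
inductive App : Ctx → Tm → Ty → Ty → Prop where
  | allApp : (τ : Ty) → τ.mono → WfTy Ψ τ → App Ψ e (A.subst τ a) C →
      App Ψ e (.all a A) C
  | arrApp : Chk Ψ e A → App Ψ e (.arr A C) C
end

/-- βη-equivalence of terms: the least congruence containing β- and η-conversion. -/
inductive BetaEta : Tm → Tm → Prop where
  | beta : BetaEta (.app (.lam x e) e') (e.subst e' x)
  | eta : x ∉ Tm.fv e → BetaEta (.lam x (.app e (.var x))) e
  | refl : BetaEta e e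
  | symm : BetaEta e₁ e₂ → BetaEta e₂ e₁
  | trans : BetaEta e₁ e₂ → BetaEta e₂ e₃ → BetaEta e₁ e₃
  | lam : BetaEta e e' → BetaEta (.lam x e) (.lam x e')
  | app : BetaEta e₁ e₁' → BetaEta e₂ e₂' → BetaEta (.app e₁ e₂) (.app e₁' e₂')
  | anno : BetaEta e e' → BetaEta (.anno e A) (.anno e' A)

end DK

namespace DK

theorem wfty_weaken {Ψ Ψ' : Ctx} {A : Ty} (h : WfTy Ψ A) (s : Ψ ⊆ Ψ') : WfTy Ψ' A :=
  fun a ha => s (h a ha)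

theorem assign_weaken {Ψ : Ctx} {f : Tm} {A : Ty} (h : Assign Ψ f A) :
    ∀ {Ψ' : Ctx}, Ψ ⊆ Ψ' → Assign Ψ' f A := by
  induction h with
  | var hm => exact fun s => .var (s hm)
  | unit => exact fun _ => .unit
  | lam _ ih => exact fun s => .lam (ih (List.cons_subset_cons _ s))
  | app _ _ ih1 ih2 => exact fun s => .app (ih1 s) (ih2 s)
  | allI _ ih => exact fun s => .allI (ih (List.cons_subset_cons _ s))
  | allE _ τ hm hw ih => exact fun s => .allE (ih s) τ hm (wfty_weaken hw s)

/-- Subtyping coercion: a subtyping derivation yields a βη-equal retyping. -/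
theorem coerce {Ψ : Ctx} {A B : Ty} (h : Sub Ψ A B) :
    ∀ {Ψ' : Ctx}, Ψ ⊆ Ψ' → ∀ {f : Tm}, f.annFree → Assign Ψ' f A →
    ∃ g, g.annFree ∧ Assign Ψ' g B ∧ BetaEta g f := by
  induction h with
  | var _ => intro Ψ' s f hf ha; exact ⟨_, hf, ha, .refl⟩
  | unit => intro Ψ' s f hf ha; exact ⟨_, hf, ha, .refl⟩
  | @arr Ψ B₁ A₁ A₂ B₂ h1 h2 ih1 ih2 =>
    intro Ψ' s f hf ha
    obtain ⟨x, hx⟩ := Infinite.exists_notMem_finset f.fv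
    have harg : Assign (Decl.var x B₁ :: Ψ') (.var x) B₁ := .var (List.mem_cons_self ..)
    obtain ⟨g1, hg1f, hg1a, hg1b⟩ :=
      ih1 (List.Subset.trans s (List.subset_cons_self _ _)) (show (Tm.var x).annFree from trivial) harg
    have hfw : Assign (Decl.var x B₁ :: Ψ') f (.arr A₁ A₂) :=
      assign_weaken ha (List.subset_cons_self _ _)
    obtain ⟨g2, hg2f, hg2a, hg2b⟩ :=
      ih2 (List.Subset.trans s (List.subset_cons_self _ _)) (show (Tm.app f g1).annFree from ⟨hf, hg1f⟩)
        (.app hfw hg1a)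
    exact ⟨.lam x g2, hg2f, .lam hg2a,
      (BetaEta.lam (hg2b.trans (.app .refl hg1b))).trans (.eta hx)⟩
  | allL τ hm hw _ ih =>
    intro Ψ' s f hf ha
    exact ih s hf (.allE ha τ hm (wfty_weaken hw s))
  | allR _ ih =>
    intro Ψ' s f hf ha
    obtain ⟨g, hgf, hga, hgb⟩ :=
      ih (List.cons_subset_cons _ s) hf (assign_weaken ha (List.subset_cons_self _ _))
    exact ⟨g, hgf, .allI hga, hgb⟩

/-- The statement proved for checking and synthesis judgments. -/
def P (Ψ : Ctx) (e : Tm) (A : Ty) : Prop :=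
  ∃ e', e'.annFree ∧ Assign Ψ e' A ∧ BetaEta e' e.erase

/-- The statement proved for the application judgment. -/
def PApp (Ψ : Ctx) (e : Tm) (A C : Ty) : Prop :=
  ∀ f : Tm, f.annFree → Assign Ψ f A →
    ∃ e', e'.annFree ∧ Assign Ψ (.app f e') C ∧ BetaEta e' e.erase

theorem Lsub {Ψ : Ctx} {e : Tm} {A B : Ty} (ih : P Ψ e A) (hs : Sub Ψ A B) : P Ψ e B := by
  obtain ⟨e', hf, ha, hb⟩ := ih
  obtain ⟨g, hgf, hga, hgb⟩ := coerce hs (List.Subset.refl _) hf ha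
  exact ⟨g, hgf, hga, hgb.trans hb⟩

theorem Lunit {Ψ : Ctx} : P Ψ .unit .unit := ⟨.unit, trivial, .unit, .refl⟩

theorem LallI {Ψ : Ctx} {a : ℕ} {e : Tm} {A : Ty} (ih : P (Decl.tvar a :: Ψ) e A) :
    P Ψ e (.all a A) := by
  obtain ⟨e', hf, ha, hb⟩ := ih
  exact ⟨e', hf, .allI ha, hb⟩

theorem LarrI {Ψ : Ctx} {x : ℕ} {e : Tm} {A B : Ty} (ih : P (Decl.var x A :: Ψ) e B) :
    P Ψ (.lam x e) (.arr A B) := by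
  obtain ⟨e', hf, ha, hb⟩ := ih
  exact ⟨.lam x e', hf, .lam ha, .lam hb⟩

theorem Lvar {Ψ : Ctx} {x : ℕ} {A : Ty} (h : Decl.var x A ∈ Ψ) : P Ψ (.var x) A :=
  ⟨.var x, trivial, .var h, .refl⟩

theorem Lanno {Ψ : Ctx} {e : Tm} {A : Ty} (ih : P Ψ e A) : P Ψ (.anno e A) A := by
  obtain ⟨e', hf, ha, hb⟩ := ih
  exact ⟨e', hf, ha, hb⟩

theorem LarrE {Ψ : Ctx} {e₁ e₂ : Tm} {A C : Ty} (ih1 : P Ψ e₁ A) (ih2 : PApp Ψ e₂ A C) :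
    P Ψ (.app e₁ e₂) C := by
  obtain ⟨f, hf, ha, hb⟩ := ih1
  obtain ⟨e', hf', ha', hb'⟩ := ih2 f hf ha
  exact ⟨.app f e', ⟨hf, hf'⟩, ha', .app hb hb'⟩

theorem LallApp {Ψ : Ctx} {e : Tm} {a : ℕ} {A C : Ty} (τ : Ty) (hm : τ.mono)
    (hw : WfTy Ψ τ) (ih : PApp Ψ e (A.subst τ a) C) : PApp Ψ e (.all a A) C :=
  fun f hf ha => ih f hf (.allE ha τ hm hw)

theorem LarrApp {Ψ : Ctx} {e : Tm} {A C : Ty} (ih : P Ψ e A) : PApp Ψ e (.arr A C) C := by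
  intro f hf ha
  obtain ⟨e', hf', ha', hb'⟩ := ih
  exact ⟨e', hf', .app ha ha', hb'⟩

/-- Soundness of bidirectional typing: a checked or synthesized term has an
    annotation-free βη-equal image typable by type assignment. -/
theorem soundness_bidirectional (Ψ : Ctx) (e : Tm) (A : Ty) :
    (Chk Ψ e A → ∃ e', e'.annFree ∧ Assign Ψ e' A ∧ BetaEta e' e.erase) ∧
    (Syn Ψ e A → ∃ e', e'.annFree ∧ Assign Ψ e' A ∧ BetaEta e' e.erase) := by
  constructor
  · intro h
    refine Chk.rec (motive_1 := fun Ψ e A _ => P Ψ e A)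
      (motive_2 := fun Ψ e A _ => P Ψ e A)
      (motive_3 := fun Ψ e A C _ => PApp Ψ e A C)
      ?_ ?_ ?_ ?_ ?_ ?_ ?_ ?_ ?_ ?_ ?_ h
    · intro Ψ e A B _ hs ih; exact Lsub ih hs
    · intro Ψ; exact Lunit
    · intro a Ψ e A _ ih; exact LallI ih
    · intro x A Ψ e B _ ih; exact LarrI ih
    · intro Ψ x A hm; exact Lvar hm
    · intro Ψ A e _ _ ih; exact Lanno ih
    · intro Ψ; exact Lunit
    · intro σ τ Ψ x e _ _ _ _ ih; exact LarrI ih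
    · intro Ψ e₁ A e₂ C _ _ ih1 ih2; exact LarrE ih1 ih2
    · intro Ψ e C a A τ hm hw _ ih; exact LallApp τ hm hw ih
    · intro Ψ e A C _ ih; exact LarrApp ih
  · intro h
    refine Syn.rec (motive_1 := fun Ψ e A _ => P Ψ e A)
      (motive_2 := fun Ψ e A _ => P Ψ e A)
      (motive_3 := fun Ψ e A C _ => PApp Ψ e A C)
      ?_ ?_ ?_ ?_ ?_ ?_ ?_ ?_ ?_ ?_ ?_ h
    · intro Ψ e A B _ hs ih; exact Lsub ih hs
    · intro Ψ; exact Lunit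
    · intro a Ψ e A _ ih; exact LallI ih
    · intro x A Ψ e B _ ih; exact LarrI ih
    · intro Ψ x A hm; exact Lvar hm
    · intro Ψ A e _ _ ih; exact Lanno ih
    · intro Ψ; exact Lunit
    · intro σ τ Ψ x e _ _ _ _ ih; exact LarrI ih
    · intro Ψ e₁ A e₂ C _ _ ih1 ih2; exact LarrE ih1 ih2
    · intro Ψ e C a A τ hm hw _ ih; exact LallApp τ hm hw ih
    · intro Ψ e A C _ ih; exact LarrApp ih

end DK
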